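/- Let ρ ∈ M_n(ℂ) be positive definite and let 𝒜 be a real *-subalgebra of M_n(ℂ) such that ρ A ρ⁻¹ ∈ 𝒜 for every A ∈ 𝒜. Let 𝒮 be a family of Hermitian n×n matrices such that for every X ∈ 𝒮 there exists a Hermitian matrix L_X ∈ 𝒜 with X = (L_X ρ + ρ L_X)/2 (a local model whose symmetric logarithmic derivatives lie in 𝒜). Then 𝒜 is sufficient for 𝒮: there exists a real conditional expectation α onto 𝒜 such that Re Tr(X B) = Re Tr(X α(B)) for all X ∈ 𝒮 and all B ∈ M_n(ℂ). If moreover 𝒜 is a complex *-subalgebra, then α can be chosen complex-linear. -/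

import Mathlib

open Matrix Complex Filter
open scoped ComplexOrder

/-- `Mat n` is the algebra of `n × n` complex matrices. -/
abbrev Mat (n : ℕ) := Matrix (Fin n) (Fin n) ℂ

/-- A real `*`-subalgebra of `M_n(ℂ)`: a real-linear subspace containing the identity,
closed under matrix multiplication and conjugate transpose. -/
def IsRealStarSubalgebra {n : ℕ} (𝒜 : Set (Mat n)) : Prop :=
  (∀ A ∈ 𝒜, ∀ B ∈ 𝒜, A + B ∈ 𝒜) ∧
  (∀ (r : ℝ), ∀ A ∈ 𝒜, r • A ∈ 𝒜) ∧
  (∀ A ∈ 𝒜, ∀ B ∈ 𝒜, A * B ∈ 𝒜) ∧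
  (∀ A ∈ 𝒜, Aᴴ ∈ 𝒜) ∧
  (1 : Mat n) ∈ 𝒜

/-- A real positive map: a real-linear map sending positive semidefinite matrices
to positive semidefinite matrices. -/
def IsRealPositiveMap {n : ℕ} (α : Mat n →ₗ[ℝ] Mat n) : Prop :=
  ∀ B : Mat n, B.PosSemidef → (α B).PosSemidef

/-- A real conditional expectation onto `𝒜`: a real positive map with range in `𝒜`
satisfying the module property `α(AB) = A·α(B)` for `A ∈ 𝒜`. -/
def IsRealCondExp {n : ℕ} (𝒜 : Set (Mat n)) (α : Mat n →ₗ[ℝ] Mat n) : Prop :=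
  IsRealPositiveMap α ∧ (∀ B : Mat n, α B ∈ 𝒜) ∧
  (∀ A ∈ 𝒜, ∀ B : Mat n, α (A * B) = A * α B)
namespace Stmt17P

/-! ### Auxiliary trace positivity lemmas -/

lemma trace_conjTranspose_mul_self_re {n : ℕ} (M : Mat n) :
    0 ≤ ((Mᴴ * M).trace).re ∧ (((Mᴴ * M).trace).re = 0 → M = 0) := by
  have h : ((Mᴴ * M).trace).re = ∑ i, ∑ k, Complex.normSq (M k i) := by
    simp only [Matrix.trace, Matrix.diag, Matrix.mul_apply, Matrix.conjTranspose_apply]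
    rw [Complex.re_sum]
    refine Finset.sum_congr rfl fun i _ => ?_
    rw [Complex.re_sum]
    refine Finset.sum_congr rfl fun k _ => ?_
    rw [Complex.star_def, ← Complex.normSq_eq_conj_mul_self]
    simp
  have hnn : ∀ i ∈ Finset.univ (α := Fin n), 0 ≤ ∑ k, Complex.normSq (M k i) :=
    fun i _ => Finset.sum_nonneg fun k _ => Complex.normSq_nonneg _
  constructor
  · rw [h]; exact Finset.sum_nonneg hnn
  · intro h0
    rw [h] at h0
    ext k i
    have h2 := (Finset.sum_eq_zero_iff_of_nonneg hnn).mp h0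
    have h3 : ∀ kk ∈ Finset.univ (α := Fin n), (0:ℝ) ≤ Complex.normSq (M kk i) :=
      fun kk _ => Complex.normSq_nonneg _
    have := (Finset.sum_eq_zero_iff_of_nonneg h3).mp (h2 i (Finset.mem_univ i)) k
      (Finset.mem_univ k)
    simpa using Complex.normSq_eq_zero.mp this

lemma trace_pd_psd {n : ℕ} {ρ y : Mat n} (hρ : ρ.PosDef) (hy : y.PosSemidef) :
    0 ≤ ((y * ρ).trace).re ∧ (((y * ρ).trace).re = 0 → y = 0) := by
  obtain ⟨B, rfl⟩ : ∃ B : Mat n, y = Bᴴ * B := by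
    open scoped MatrixOrder in
    obtain ⟨B, hB⟩ := CStarAlgebra.nonneg_iff_eq_star_mul_self.mp hy.nonneg
    exact ⟨B, hB⟩
  set s := (open scoped MatrixOrder in CFC.sqrt ρ) with hs
  have hss : s * s = ρ := by
    open scoped MatrixOrder in
    exact CFC.sqrt_mul_sqrt_self ρ hρ.posSemidef.nonneg
  have hsh : sᴴ = s := by
    open scoped MatrixOrder in
    exact (CFC.sqrt_nonneg ρ).posSemidef.isHermitian
  have key : ((Bᴴ * B * ρ).trace) = (((B * s)ᴴ * (B * s)).trace) := by
    rw [conjTranspose_mul, hsh, trace_mul_comm, ← hss, Matrix.mul_assoc s s _,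
      trace_mul_comm s (s * (Bᴴ * B))]
    simp only [Matrix.mul_assoc]
  have hM := trace_conjTranspose_mul_self_re (B * s)
  refine ⟨by rw [key]; exact hM.1, fun h0 => ?_⟩
  rw [key] at h0
  have hBs : B * s = 0 := hM.2 h0
  have hinv : ρ * ρ⁻¹ = 1 :=
    Matrix.mul_nonsing_inv _ (Matrix.isUnit_iff_isUnit_det _ |>.mp hρ.isUnit)
  have hB0 : B = 0 := by
    have h1 : B * s * s = 0 := by rw [hBs, Matrix.zero_mul]
    rw [Matrix.mul_assoc, hss] at h1
    calc B = B * (ρ * ρ⁻¹) := by rw [hinv, Matrix.mul_one]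
    _ = (B * ρ) * ρ⁻¹ := by rw [Matrix.mul_assoc]
    _ = 0 := by rw [h1, Matrix.zero_mul]
  rw [hB0]; simp

/-! ### The weighted projection onto a real subspace -/

noncomputable def Phi {n : ℕ} (ρ : Mat n) : Mat n →ₗ[ℝ] Mat n →ₗ[ℝ] ℝ where
  toFun C :=
    { toFun := fun B => ((Cᴴ * B * ρ).trace).re
      map_add' := fun B1 B2 => by
        simp [Matrix.mul_add, Matrix.add_mul]
      map_smul' := fun r B => by
        rw [Matrix.mul_smul, Matrix.smul_mul, Matrix.trace_smul]
        simp [Complex.smul_re] }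
  map_add' := fun C1 C2 => by
    apply LinearMap.ext; intro B
    simp [Matrix.conjTranspose_add, Matrix.add_mul]
  map_smul' := fun r C => by
    apply LinearMap.ext; intro B
    simp only [LinearMap.coe_mk, AddHom.coe_mk, RingHom.id_apply, LinearMap.smul_apply,
      smul_eq_mul]
    rw [Matrix.conjTranspose_smul, star_trivial, Matrix.smul_mul, Matrix.smul_mul,
      Matrix.trace_smul]
    simp [Complex.smul_re]

lemma Phi_apply {n : ℕ} (ρ C B : Mat n) : Phi ρ C B = ((Cᴴ * B * ρ).trace).re := rfl

lemma Phi_self {n : ℕ} {ρ : Mat n} (hρ : ρ.PosDef) (A : Mat n) (h : Phi ρ A A = 0) :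
    A = 0 := by
  rw [Phi_apply] at h
  have := (trace_pd_psd hρ (posSemidef_conjTranspose_mul_self A)).2 h
  exact conjTranspose_mul_self_eq_zero.mp this

variable {n : ℕ} (ρ : Mat n) (S : Submodule ℝ (Mat n))

noncomputable def phid : Mat n →ₗ[ℝ] Module.Dual ℝ S :=
  ((Phi ρ).flip).compl₂ S.subtype

noncomputable def psiS : S →ₗ[ℝ] Module.Dual ℝ S := (phid ρ S).comp S.subtype

lemma psiS_bij (hρ : ρ.PosDef) : Function.Bijective (psiS ρ S) := by
  have hinj : Function.Injective (psiS ρ S) := by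
    rw [injective_iff_map_eq_zero]
    intro x hx
    have h1 : Phi ρ (x : Mat n) (x : Mat n) = 0 := by
      have := congrArg (fun f : Module.Dual ℝ S => f x) hx
      simpa [psiS, phid] using this
    exact Subtype.ext (Phi_self hρ _ h1)
  exact ⟨hinj,
    (LinearMap.injective_iff_surjective_of_finrank_eq_finrank
      (Subspace.dual_finrank_eq).symm).mp hinj⟩

noncomputable def Eproj (hρ : ρ.PosDef) : Mat n →ₗ[ℝ] Mat n :=
  S.subtype ∘ₗ
    ((LinearEquiv.ofBijective (psiS ρ S) (psiS_bij ρ S hρ)).symm :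
      Module.Dual ℝ S →ₗ[ℝ] S) ∘ₗ phid ρ S

lemma Eproj_mem (hρ : ρ.PosDef) (B : Mat n) : Eproj ρ S hρ B ∈ S := by
  simp only [Eproj, LinearMap.comp_apply, Submodule.subtype_apply]
  exact SetLike.coe_mem _

lemma Phi_Eproj (hρ : ρ.PosDef) (C : Mat n) (hC : C ∈ S) (B : Mat n) :
    Phi ρ C (Eproj ρ S hρ B) = Phi ρ C B := by
  have h := (LinearEquiv.ofBijective (psiS ρ S) (psiS_bij ρ S hρ)).apply_symm_apply
    (phid ρ S B)
  have h2 := congrArg (fun f : Module.Dual ℝ S => f ⟨C, hC⟩) h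
  exact h2

lemma Eproj_unique (hρ : ρ.PosDef) (B y : Mat n) (hy : y ∈ S)
    (h : ∀ C ∈ S, Phi ρ C B = Phi ρ C y) : Eproj ρ S hρ B = y := by
  set d := Eproj ρ S hρ B - y with hd
  have hdS : d ∈ S := S.sub_mem (Eproj_mem ρ S hρ B) hy
  have hz : Phi ρ d d = 0 := by
    have h1 : Phi ρ d (Eproj ρ S hρ B) = Phi ρ d B := Phi_Eproj ρ S hρ d hdS B
    have h2 : Phi ρ d B = Phi ρ d y := h d hdS
    have h3 : Phi ρ d d = Phi ρ d (Eproj ρ S hρ B) - Phi ρ d y := by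
      rw [hd, map_sub]
    rw [h3, h1, h2, sub_self]
  have := Phi_self hρ d hz
  rw [hd] at this
  exact sub_eq_zero.mp this

/-! ### Functional calculus for Hermitian matrices -/

section Spectral
variable {x : Mat n} (hx : x.IsHermitian)

noncomputable def fm (f : ℝ → ℝ) : Mat n :=
  (hx.eigenvectorUnitary : Mat n) * diagonal (fun i => ((f (hx.eigenvalues i) : ℝ) : ℂ)) *
    (star (hx.eigenvectorUnitary : Mat n))

lemma unit_star_mul :
    (star (hx.eigenvectorUnitary : Mat n)) * (hx.eigenvectorUnitary : Mat n) = 1 := by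
  simpa using congrArg (Subtype.val) (unitary.star_mul_self hx.eigenvectorUnitary)

lemma unit_mul_star :
    (hx.eigenvectorUnitary : Mat n) * (star (hx.eigenvectorUnitary : Mat n)) = 1 := by
  simpa using congrArg (Subtype.val) (unitary.mul_star_self hx.eigenvectorUnitary)

lemma fm_congr {f g : ℝ → ℝ} (h : ∀ i, f (hx.eigenvalues i) = g (hx.eigenvalues i)) :
    fm hx f = fm hx g := by
  have hfun : (fun i : Fin n => ((f (hx.eigenvalues i) : ℝ) : ℂ)) =
      (fun i => ((g (hx.eigenvalues i) : ℝ) : ℂ)) := by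
    funext i; rw [h i]
  unfold fm; rw [hfun]

lemma fm_mul (f g : ℝ → ℝ) : fm hx f * fm hx g = fm hx (fun t => f t * g t) := by
  unfold fm
  simp only [Matrix.mul_assoc]
  rw [← Matrix.mul_assoc (star (hx.eigenvectorUnitary : Mat n))
    (hx.eigenvectorUnitary : Mat n), unit_star_mul hx, Matrix.one_mul,
    ← Matrix.mul_assoc (diagonal _) (diagonal _), diagonal_mul_diagonal]
  push_cast
  rfl

lemma fm_one : fm hx (fun _ => 1) = 1 := by
  unfold fm
  simp only [Complex.ofReal_one, diagonal_one, Matrix.mul_one]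
  exact unit_mul_star hx

lemma fm_zero : fm hx (fun _ => 0) = 0 := by
  unfold fm; simp

lemma fm_id : fm hx (fun t => t) = x := by
  simpa [fm, Function.comp_def] using hx.spectral_theorem.symm

lemma fm_neg (g : ℝ → ℝ) : fm hx (fun t => -(g t)) = -(fm hx g) := by
  have hfun : (fun i : Fin n => ((-(g (hx.eigenvalues i)) : ℝ) : ℂ)) =
      (fun i => -((g (hx.eigenvalues i) : ℝ) : ℂ)) := by
    funext i; push_cast; rfl
  unfold fm
  rw [hfun, ← diagonal_neg, Matrix.mul_neg, Matrix.neg_mul]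

lemma fm_psd {f : ℝ → ℝ} (h : ∀ i, 0 ≤ f (hx.eigenvalues i)) : (fm hx f).PosSemidef := by
  have hd : (diagonal (fun i => ((f (hx.eigenvalues i) : ℝ) : ℂ))).PosSemidef :=
    Matrix.PosSemidef.diagonal fun i => Complex.zero_le_real.mpr (h i)
  exact hd.mul_mul_conjTranspose_same _

lemma fm_eq_zero {f : ℝ → ℝ} (h : fm hx f = 0) : ∀ i, f (hx.eigenvalues i) = 0 := by
  intro i
  have hD : diagonal (fun i => ((f (hx.eigenvalues i) : ℝ) : ℂ)) = 0 := by
    have h2 : (0 : Mat n) = diagonal (fun i => ((f (hx.eigenvalues i) : ℝ) : ℂ)) := by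
      simpa [fm, Matrix.mul_assoc, unit_star_mul hx,
        ← Matrix.mul_assoc (star (hx.eigenvectorUnitary : Mat n)), Matrix.mul_zero,
        Matrix.zero_mul] using (congrArg (fun M => (star (hx.eigenvectorUnitary : Mat n)) * M *
          (hx.eigenvectorUnitary : Mat n)) h).symm
    exact h2.symm
  have := congrFun (congrFun hD i) i
  simpa using this

lemma fm_pow (k : ℕ) : x ^ k = fm hx (fun t => t ^ k) := by
  induction k with
  | zero => simpa using (fm_one hx).symm
  | succ k ih =>
    have hm := fm_mul hx (fun t => t ^ k) (fun t => t)
    rw [fm_id hx] at hm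
    rw [pow_succ, ih, hm]
    exact fm_congr hx (fun i => (pow_succ _ _).symm)

lemma fm_add (f g : ℝ → ℝ) : fm hx f + fm hx g = fm hx (fun t => f t + g t) := by
  unfold fm
  have hfun : (fun i : Fin n => (((f (hx.eigenvalues i) + g (hx.eigenvalues i)) : ℝ) : ℂ)) =
      fun i => ((f (hx.eigenvalues i) : ℝ) : ℂ) + ((g (hx.eigenvalues i) : ℝ) : ℂ) := by
    funext i; push_cast; rfl
  rw [hfun, ← diagonal_add, Matrix.mul_add, Matrix.add_mul]

lemma fm_smul (c : ℝ) (f : ℝ → ℝ) : c • fm hx f = fm hx (fun t => c * f t) := by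
  unfold fm
  have hfun : (fun i : Fin n => (((c * f (hx.eigenvalues i)) : ℝ) : ℂ)) =
      c • fun i => ((f (hx.eigenvalues i) : ℝ) : ℂ) := by
    funext i; simp only [Pi.smul_apply, Complex.real_smul]; push_cast; ring
  rw [hfun, diagonal_smul, Matrix.mul_smul, Matrix.smul_mul]

lemma fm_sum (s : Finset ℕ) (c : ℕ → ℝ) (v : ℕ → ℝ → ℝ) :
    (∑ k ∈ s, c k • fm hx (v k)) = fm hx (fun t => ∑ k ∈ s, c k * v k t) := by
  classical
  induction s using Finset.induction with
  | empty => simpa using (fm_zero hx).symm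
  | insert _ _ hks ih =>
    rw [Finset.sum_insert hks, ih, fm_smul, fm_add]
    exact fm_congr hx fun i => by rw [Finset.sum_insert hks]

lemma fm_poly (p : Polynomial ℝ) :
    fm hx (fun t => p.eval t) = ∑ k ∈ Finset.range (p.natDegree + 1), p.coeff k • x ^ k := by
  have hpw : ∀ k : ℕ, x ^ k = fm hx (fun t => t ^ k) := fm_pow hx
  calc fm hx (fun t => p.eval t)
      = fm hx (fun t => ∑ k ∈ Finset.range (p.natDegree + 1), p.coeff k * t ^ k) :=
        fm_congr hx fun i => by rw [Polynomial.eval_eq_sum_range]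
    _ = ∑ k ∈ Finset.range (p.natDegree + 1), p.coeff k • fm hx (fun t => t ^ k) :=
        (fm_sum hx _ _ _).symm
    _ = ∑ k ∈ Finset.range (p.natDegree + 1), p.coeff k • x ^ k := by
        refine Finset.sum_congr rfl fun k _ => ?_
        rw [hpw k]

lemma fm_mem (T : Submodule ℝ (Mat n)) (hmul : ∀ a ∈ T, ∀ b ∈ T, a * b ∈ T)
    (h1 : (1 : Mat n) ∈ T) (hxS : x ∈ T) (f : ℝ → ℝ) : fm hx f ∈ T := by
  classical
  set p := Lagrange.interpolate (Finset.image hx.eigenvalues Finset.univ) id f with hp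
  have heval : ∀ i, p.eval (hx.eigenvalues i) = f (hx.eigenvalues i) := fun i =>
    Lagrange.eval_interpolate_at_node f (Set.injOn_id _)
      (Finset.mem_image_of_mem _ (Finset.mem_univ i))
  have h1' : fm hx f = fm hx (fun t => p.eval t) := fm_congr hx (fun i => (heval i).symm)
  rw [h1', fm_poly]
  have hpow : ∀ k : ℕ, x ^ k ∈ T := by
    intro k
    induction k with
    | zero => simpa using h1
    | succ k ih => rw [pow_succ]; exact hmul _ ih _ hxS
  exact Submodule.sum_mem T fun k _ => Submodule.smul_mem T _ (hpow k)

end Spectral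
end Stmt17P

theorem stmt17 {n : ℕ} (ρ : Mat n) (hρ : ρ.PosDef)
    (𝒜 : Set (Mat n)) (h𝒜 : IsRealStarSubalgebra 𝒜)
    (hmod : ∀ A ∈ 𝒜, ρ * A * ρ⁻¹ ∈ 𝒜)
    (𝒮 : Set (Mat n)) (hherm : ∀ X ∈ 𝒮, X.IsHermitian)
    (hsld : ∀ X ∈ 𝒮, ∃ L ∈ 𝒜, L.IsHermitian ∧ X = (2⁻¹ : ℂ) • (L * ρ + ρ * L)) :
    (∃ α : Mat n →ₗ[ℝ] Mat n, IsRealCondExp 𝒜 α ∧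
      ∀ X ∈ 𝒮, ∀ B : Mat n, ((X * B).trace).re = ((X * α B).trace).re) ∧
    ((∀ A ∈ 𝒜, (Complex.I : ℂ) • A ∈ 𝒜) →
      ∃ α : Mat n →ₗ[ℝ] Mat n, IsRealCondExp 𝒜 α ∧
        (∀ B : Mat n, α ((Complex.I : ℂ) • B) = (Complex.I : ℂ) • α B) ∧
        ∀ X ∈ 𝒮, ∀ B : Mat n, ((X * B).trace).re = ((X * α B).trace).re) := by
  classical
  obtain ⟨hadd, hsmul, hmulc, hstarc, hone⟩ := h𝒜
  have hρH : ρᴴ = ρ := hρ.isHermitian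
  have hdet : IsUnit ρ.det := (Matrix.isUnit_iff_isUnit_det ρ).mp hρ.isUnit
  have hinv1 : ρ * ρ⁻¹ = 1 := Matrix.mul_nonsing_inv ρ hdet
  have hρiH : ρ⁻¹ᴴ = ρ⁻¹ := by rw [Matrix.conjTranspose_nonsing_inv, hρH]
  set S : Submodule ℝ (Mat n) :=
    { carrier := 𝒜
      add_mem' := fun ha hb => hadd _ ha _ hb
      zero_mem' := by simpa using hsmul 0 1 hone
      smul_mem' := fun r a ha => hsmul r a ha } with hSdef
  set E : Mat n →ₗ[ℝ] Mat n := Stmt17P.Eproj ρ S hρ with hEdef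
  have hEmem : ∀ B : Mat n, E B ∈ 𝒜 := fun B => Stmt17P.Eproj_mem ρ S hρ B
  have hproj : ∀ C ∈ 𝒜, ∀ B : Mat n,
      ((Cᴴ * E B * ρ).trace).re = ((Cᴴ * B * ρ).trace).re :=
    fun C hC B => Stmt17P.Phi_Eproj ρ S hρ C hC B
  have huniq : ∀ (B y : Mat n), y ∈ 𝒜 →
      (∀ C ∈ 𝒜, ((Cᴴ * B * ρ).trace).re = ((Cᴴ * y * ρ).trace).re) → E B = y :=
    fun B y hy h => Stmt17P.Eproj_unique ρ S hρ B y hy (fun C hC => h C hC)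
  -- trace identity: the `ᴴ`-twist
  have Tstar : ∀ C Y : Mat n,
      ((Cᴴ * Yᴴ * ρ).trace).re = (((ρ * Cᴴ * ρ⁻¹)ᴴ * Y * ρ).trace).re := by
    intro C Y
    have hDm : (ρ * Cᴴ * ρ⁻¹)ᴴ * Y * ρ = ρ⁻¹ * (C * (ρ * (Y * ρ))) := by
      simp only [Matrix.conjTranspose_mul, hρiH, hρH, Matrix.conjTranspose_conjTranspose,
        Matrix.mul_assoc]
    have hL : ((Cᴴ * Yᴴ * ρ).trace).re = ((ρ * (Y * C)).trace).re := by
      have hM : (Cᴴ * Yᴴ * ρ)ᴴ = ρ * (Y * C) := by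
        simp only [Matrix.conjTranspose_mul, hρH, Matrix.conjTranspose_conjTranspose,
          Matrix.mul_assoc]
      rw [← hM, Matrix.trace_conjTranspose]
      exact (Complex.conj_re _).symm
    rw [hL, hDm, Matrix.trace_mul_comm (ρ⁻¹) (C * (ρ * (Y * ρ)))]
    have h2 : C * (ρ * (Y * ρ)) * ρ⁻¹ = C * (ρ * Y) := by
      simp only [Matrix.mul_assoc, hinv1, Matrix.mul_one]
    rw [h2, Matrix.trace_mul_comm C (ρ * Y)]
    simp only [Matrix.mul_assoc]
  -- trace identity: right multiplication twist
  have Tright : ∀ A C Y : Mat n,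
      ((Cᴴ * (Y * A) * ρ).trace).re = (((C * (ρ * Aᴴ * ρ⁻¹))ᴴ * Y * ρ).trace).re := by
    intro A C Y
    have hDm : (C * (ρ * Aᴴ * ρ⁻¹))ᴴ * Y * ρ = ρ⁻¹ * (A * (ρ * (Cᴴ * (Y * ρ)))) := by
      simp only [Matrix.conjTranspose_mul, hρiH, hρH, Matrix.conjTranspose_conjTranspose,
        Matrix.mul_assoc]
    rw [hDm, Matrix.trace_mul_comm (ρ⁻¹) (A * (ρ * (Cᴴ * (Y * ρ))))]
    have h1 : A * (ρ * (Cᴴ * (Y * ρ))) * ρ⁻¹ = A * (ρ * (Cᴴ * Y)) := by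
      simp only [Matrix.mul_assoc, hinv1, Matrix.mul_one]
    rw [h1, Matrix.trace_mul_comm A (ρ * (Cᴴ * Y)),
      Matrix.trace_mul_comm (Cᴴ * (Y * A)) ρ]
    simp only [Matrix.mul_assoc]
  -- trace identities for the SLD terms
  have Tsld_a : ∀ L Y : Mat n, Lᴴ = L →
      ((L * ρ * Y).trace).re = (((ρ * L * ρ⁻¹)ᴴ * Y * ρ).trace).re := by
    intro L Y hLh
    have hDm : (ρ * L * ρ⁻¹)ᴴ * Y * ρ = ρ⁻¹ * (L * (ρ * (Y * ρ))) := by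
      simp only [Matrix.conjTranspose_mul, hρiH, hρH, hLh, Matrix.mul_assoc]
    rw [hDm, Matrix.trace_mul_comm (ρ⁻¹) (L * (ρ * (Y * ρ)))]
    have h1 : L * (ρ * (Y * ρ)) * ρ⁻¹ = L * (ρ * Y) := by
      simp only [Matrix.mul_assoc, hinv1, Matrix.mul_one]
    rw [h1]
    simp only [Matrix.mul_assoc]
  have Tsld_b : ∀ L Y : Mat n, Lᴴ = L →
      ((ρ * L * Y).trace).re = ((Lᴴ * Y * ρ).trace).re := by
    intro L Y hLh
    rw [hLh, Matrix.trace_mul_comm (ρ * L) Y]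
    rw [show Y * (ρ * L) = Y * ρ * L by simp only [Matrix.mul_assoc],
      Matrix.trace_mul_comm (Y * ρ) L]
    simp only [Matrix.mul_assoc]
  -- trace identity for multiplication by I
  have Timag : ∀ C Y : Mat n,
      ((Cᴴ * ((Complex.I : ℂ) • Y) * ρ).trace).re =
        -(((((Complex.I : ℂ) • C)ᴴ * Y * ρ).trace).re) := by
    intro C Y
    have h1 : Cᴴ * ((Complex.I : ℂ) • Y) * ρ = (Complex.I : ℂ) • (Cᴴ * Y * ρ) := by
      rw [Matrix.mul_smul, Matrix.smul_mul]
    have h2 : ((Complex.I : ℂ) • C)ᴴ * Y * ρ = (-(Complex.I : ℂ)) • (Cᴴ * Y * ρ) := by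
      rw [Matrix.conjTranspose_smul, Complex.star_def, Complex.conj_I,
        Matrix.smul_mul, Matrix.smul_mul]
    rw [h1, h2, Matrix.trace_smul, Matrix.trace_smul]
    set w := (Cᴴ * Y * ρ).trace with hw
    simp [Complex.mul_re]
  -- E respects conjTranspose
  have hstarE : ∀ B : Mat n, E Bᴴ = (E B)ᴴ := by
    intro B
    apply huniq _ _ (hstarc _ (hEmem B))
    intro C hC
    have hD : ρ * Cᴴ * ρ⁻¹ ∈ 𝒜 := hmod _ (hstarc _ hC)
    calc ((Cᴴ * Bᴴ * ρ).trace).re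
        = (((ρ * Cᴴ * ρ⁻¹)ᴴ * B * ρ).trace).re := Tstar C B
      _ = (((ρ * Cᴴ * ρ⁻¹)ᴴ * E B * ρ).trace).re := (hproj _ hD _).symm
      _ = ((Cᴴ * (E B)ᴴ * ρ).trace).re := (Tstar C (E B)).symm
  -- left module property
  have hleft : ∀ A ∈ 𝒜, ∀ B : Mat n, E (A * B) = A * E B := by
    intro A hA B
    apply huniq _ _ (hmulc _ hA _ (hEmem B))
    intro C hC
    have hmat : ∀ Y : Mat n, Cᴴ * (A * Y) * ρ = (Aᴴ * C)ᴴ * Y * ρ := by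
      intro Y
      simp only [Matrix.conjTranspose_mul, Matrix.conjTranspose_conjTranspose,
        Matrix.mul_assoc]
    rw [hmat B, hmat (E B)]
    exact (hproj _ (hmulc _ (hstarc _ hA) _ hC) B).symm
  -- right module property
  have hright : ∀ A ∈ 𝒜, ∀ B : Mat n, E (B * A) = E B * A := by
    intro A hA B
    apply huniq _ _ (hmulc _ (hEmem B) _ hA)
    intro C hC
    have hD : C * (ρ * Aᴴ * ρ⁻¹) ∈ 𝒜 := hmulc _ hC _ (hmod _ (hstarc _ hA))
    calc ((Cᴴ * (B * A) * ρ).trace).re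
        = (((C * (ρ * Aᴴ * ρ⁻¹))ᴴ * B * ρ).trace).re := Tright A C B
      _ = (((C * (ρ * Aᴴ * ρ⁻¹))ᴴ * E B * ρ).trace).re := (hproj _ hD _).symm
      _ = ((Cᴴ * (E B * A) * ρ).trace).re := (Tright A C (E B)).symm
  -- state preservation
  have hstate : ∀ B : Mat n, ((B * ρ).trace).re = ((E B * ρ).trace).re := by
    intro B
    have h1 := hproj 1 hone B
    simpa using h1.symm
  -- positivity
  have hpos : IsRealPositiveMap E := by
    intro B hB
    have hBH : Bᴴ = B := hB.isHermitian
    have hxHerm : (E B).IsHermitian := by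
      have h1 := hstarE B
      rw [hBH] at h1
      exact h1.symm
    set f : ℝ → ℝ := fun t => max (-t) 0 with hf
    have hf0 : ∀ t, 0 ≤ f t := fun t => le_max_right _ _
    set y := Stmt17P.fm hxHerm f with hy
    have hyA : y ∈ 𝒜 :=
      Stmt17P.fm_mem hxHerm S (fun a ha b hb => hmulc a ha b hb) hone (hEmem B) f
    have hypsd : y.PosSemidef := Stmt17P.fm_psd hxHerm (fun i => hf0 _)
    have hyH : yᴴ = y := hypsd.isHermitian
    set z := Stmt17P.fm hxHerm (fun t => f t * f t * f t) with hzdef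
    have hzpsd : z.PosSemidef := Stmt17P.fm_psd hxHerm
      (fun i => mul_nonneg (mul_nonneg (hf0 _) (hf0 _)) (hf0 _))
    have hm1 : y * E B = Stmt17P.fm hxHerm (fun t => f t * t) := by
      have h1 := Stmt17P.fm_mul hxHerm f (fun t => t)
      rw [Stmt17P.fm_id hxHerm] at h1
      exact h1
    have hm2 : y * E B * y = Stmt17P.fm hxHerm (fun t => f t * t * f t) := by
      rw [hm1]
      exact Stmt17P.fm_mul hxHerm _ f
    have hptw : ∀ t : ℝ, f t * t * f t = -(f t * f t * f t) := by
      intro t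
      rcases le_total t 0 with h | h
      · simp only [hf, max_eq_left (neg_nonneg.mpr h)]; ring
      · simp only [hf, max_eq_right (neg_nonpos.mpr h)]; ring
    have hz : y * E B * y = -z := by
      rw [hm2, Stmt17P.fm_congr hxHerm (g := fun t => -(f t * f t * f t)) (fun i => hptw _),
        Stmt17P.fm_neg]
    have hbim : E (y * (B * y)) = y * (E B * y) := by
      rw [hleft y hyA (B * y), hright y hyA B]
    have hpsd1 : (y * (B * y)).PosSemidef := by
      have h1 := hB.conjTranspose_mul_mul_same y
      rw [hyH, Matrix.mul_assoc] at h1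
      exact h1
    have hge1 : 0 ≤ (((y * (B * y)) * ρ).trace).re := (Stmt17P.trace_pd_psd hρ hpsd1).1
    have hge2 : 0 ≤ ((z * ρ).trace).re := (Stmt17P.trace_pd_psd hρ hzpsd).1
    have heq : (((y * (B * y)) * ρ).trace).re = -(((z * ρ).trace).re) := by
      rw [hstate (y * (B * y)), hbim]
      have h1 : y * (E B * y) = -z := by rw [← Matrix.mul_assoc]; exact hz
      rw [h1, Matrix.neg_mul, Matrix.trace_neg]
      simp
    have hz0 : ((z * ρ).trace).re = 0 := by linarith
    have hzz : z = 0 := (Stmt17P.trace_pd_psd hρ hzpsd).2 hz0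
    have hfe : ∀ i, f (hxHerm.eigenvalues i) = 0 := by
      intro i
      have h3 := Stmt17P.fm_eq_zero hxHerm (hzdef ▸ hzz) i
      have h4 : f (hxHerm.eigenvalues i) ^ 3 = 0 := by
        rw [show f (hxHerm.eigenvalues i) ^ 3 =
          f (hxHerm.eigenvalues i) * f (hxHerm.eigenvalues i) * f (hxHerm.eigenvalues i) by
            ring]
        exact h3
      exact pow_eq_zero_iff (by norm_num) |>.mp h4
    have hev : ∀ i, 0 ≤ hxHerm.eigenvalues i := by
      intro i
      have hle : -hxHerm.eigenvalues i ≤ f (hxHerm.eigenvalues i) := le_max_left _ _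
      rw [hfe i] at hle
      linarith
    have h5 : (Stmt17P.fm hxHerm (fun t => t)).PosSemidef := Stmt17P.fm_psd hxHerm hev
    rwa [Stmt17P.fm_id] at h5
  -- the sufficiency trace identity
  have htr : ∀ X ∈ 𝒮, ∀ B : Mat n, ((X * B).trace).re = ((X * E B).trace).re := by
    intro X hX B
    obtain ⟨L, hL, hLH, hXeq⟩ := hsld X hX
    have hLh : Lᴴ = L := hLH
    have hDL : ρ * L * ρ⁻¹ ∈ 𝒜 := hmod _ hL
    have key : ∀ Y : Mat n, ((X * Y).trace).re =
        2⁻¹ * ((((ρ * L * ρ⁻¹)ᴴ * Y * ρ).trace).re + ((Lᴴ * Y * ρ).trace).re) := by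
      intro Y
      rw [hXeq, Matrix.smul_mul, Matrix.add_mul, Matrix.trace_smul, Matrix.trace_add]
      rw [← Tsld_a L Y hLh, ← Tsld_b L Y hLh]
      rw [show ((2⁻¹ : ℂ)) • ((L * ρ * Y).trace + (ρ * L * Y).trace) =
        ((2⁻¹ : ℝ) : ℂ) * ((L * ρ * Y).trace + (ρ * L * Y).trace) by push_cast; rw [smul_eq_mul]]
      rw [Complex.re_ofReal_mul, Complex.add_re]
    rw [key B, key (E B), hproj _ hDL B, hproj _ hL B]
  -- complex linearity under the extra hypothesis
  have hcpx : (∀ A ∈ 𝒜, (Complex.I : ℂ) • A ∈ 𝒜) →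
      ∀ B : Mat n, E ((Complex.I : ℂ) • B) = (Complex.I : ℂ) • E B := by
    intro hiA B
    apply huniq _ _ (hiA _ (hEmem B))
    intro C hC
    calc ((Cᴴ * ((Complex.I : ℂ) • B) * ρ).trace).re
        = -(((((Complex.I : ℂ) • C)ᴴ * B * ρ).trace).re) := Timag C B
      _ = -(((((Complex.I : ℂ) • C)ᴴ * E B * ρ).trace).re) := by
          rw [hproj _ (hiA _ hC) B]
      _ = ((Cᴴ * ((Complex.I : ℂ) • E B) * ρ).trace).re := (Timag C (E B)).symm
  have hce : IsRealCondExp 𝒜 E := ⟨hpos, hEmem, fun A hA B => hleft A hA B⟩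
  exact ⟨⟨E, hce, htr⟩, fun hiA => ⟨E, hce, hcpx hiA, htr⟩⟩
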